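/- arXiv:1201.0930 — 2 statements merged into one kernel-verified Lean document; each statement's English description precedes it below -/
import Mathlib

section
/- Let v₁ = (a₁,a₂), v₂ = (b₁,b₂) ∈ ℤ² be two vertices of a 2-dimensional reflexive polytope ∇^φ that are the lattice neighbors of a vertex v_z of ∇^φ along the two edges through v_z, and suppose v_z = v₁ + v₂. Then a₁b₂ - a₂b₁ = ±1. -/
open Set

noncomputable section

def dot2 (x y : ℝ × ℝ) : ℝ := x.1 * y.1 + x.2 * y.2

def isLattice2 (x : ℝ × ℝ) : Prop := ∃ a b : ℤ, x = ((a : ℝ), (b : ℝ))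

def dual2 (P : Set (ℝ × ℝ)) : Set (ℝ × ℝ) := {v | ∀ m ∈ P, dot2 m v ≥ -1}

/-- Let `v₁ = (a₁,a₂)` and `v₂ = (b₁,b₂)` be the lattice neighbors of a vertex
`v_z = (z₁,z₂)` of a 2-dimensional reflexive polytope along the two edges through `v_z`
(the edges lie on lines `⟨·,mᵢ⟩ = -1` with `mᵢ ∈ ℤ²`, and `v₁ - v_z`, `v₂ - v_z` are
primitive).  If `v_z = v₁ + v₂` then `a₁b₂ - a₂b₁ = ±1`. -/
theorem stmt4 (a₁ a₂ b₁ b₂ z₁ z₂ : ℤ)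
    (S : Finset (ℝ × ℝ)) (hSlat : ∀ x ∈ S, isLattice2 x)
    (h0 : ((0 : ℝ), (0 : ℝ)) ∈ interior (convexHull ℝ (S : Set (ℝ × ℝ))))
    (href : ∃ T : Finset (ℝ × ℝ), (∀ x ∈ T, isLattice2 x) ∧
      dual2 (convexHull ℝ (S : Set (ℝ × ℝ))) = convexHull ℝ (T : Set (ℝ × ℝ)))
    (hzvert : ((z₁ : ℝ), (z₂ : ℝ)) ∈ Set.extremePoints ℝ (convexHull ℝ (S : Set (ℝ × ℝ))))
    (m₁ m₂ : ℤ × ℤ) (hmne : m₁ ≠ m₂)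
    (hsupp1 : ∀ x ∈ convexHull ℝ (S : Set (ℝ × ℝ)),
      dot2 x ((m₁.1 : ℝ), (m₁.2 : ℝ)) ≥ -1)
    (hsupp2 : ∀ x ∈ convexHull ℝ (S : Set (ℝ × ℝ)),
      dot2 x ((m₂.1 : ℝ), (m₂.2 : ℝ)) ≥ -1)
    (he1z : dot2 ((z₁ : ℝ), (z₂ : ℝ)) ((m₁.1 : ℝ), (m₁.2 : ℝ)) = -1)
    (he11 : dot2 ((a₁ : ℝ), (a₂ : ℝ)) ((m₁.1 : ℝ), (m₁.2 : ℝ)) = -1)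
    (he2z : dot2 ((z₁ : ℝ), (z₂ : ℝ)) ((m₂.1 : ℝ), (m₂.2 : ℝ)) = -1)
    (he22 : dot2 ((b₁ : ℝ), (b₂ : ℝ)) ((m₂.1 : ℝ), (m₂.2 : ℝ)) = -1)
    (hv1 : ((a₁ : ℝ), (a₂ : ℝ)) ∈ convexHull ℝ (S : Set (ℝ × ℝ)))
    (hv2 : ((b₁ : ℝ), (b₂ : ℝ)) ∈ convexHull ℝ (S : Set (ℝ × ℝ)))
    (hn1 : Int.gcd (a₁ - z₁) (a₂ - z₂) = 1)
    (hn2 : Int.gcd (b₁ - z₁) (b₂ - z₂) = 1)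
    (hsum : z₁ = a₁ + b₁ ∧ z₂ = a₂ + b₂) :
    a₁ * b₂ - a₂ * b₁ = 1 ∨ a₁ * b₂ - a₂ * b₁ = -1 := by
  obtain ⟨hz1, hz2⟩ := hsum
  subst hz1; subst hz2
  simp only [dot2] at he1z he11 he2z he22
  have e1 : a₁ * m₁.1 + a₂ * m₁.2 = -1 := by exact_mod_cast he11
  have e2 : b₁ * m₂.1 + b₂ * m₂.2 = -1 := by exact_mod_cast he22
  have e1z : (a₁ + b₁) * m₁.1 + (a₂ + b₂) * m₁.2 = -1 := by exact_mod_cast he1z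
  have e2z : (a₁ + b₁) * m₂.1 + (a₂ + b₂) * m₂.2 = -1 := by exact_mod_cast he2z
  have e3 : b₁ * m₁.1 + b₂ * m₁.2 = 0 := by linarith
  have e4 : a₁ * m₂.1 + a₂ * m₂.2 = 0 := by linarith
  have key : (a₁ * b₂ - a₂ * b₁) * (m₁.1 * m₂.2 - m₁.2 * m₂.1) = 1 := by nlinarith [e1, e2, e3, e4]
  rcases Int.isUnit_iff.mp (IsUnit.of_mul_eq_one _ key) with h | h <;> [left; right] <;> exact h
end
end

section
/- The polytope ∇ ⊂ ℝ³ with vertices (-1,1,0), (2,-1,0), (-1,-1,-6), (-1,-1,6) is reflexive, but the image of its set of lattice points under the projection (z₁,z₂,z₃) ↦ (z₁,z₂) is not contained in the 2-dimensional reflexive polytope with vertices (-1,1), (1,-1) and the lattice points between them together with (2,-1); in particular, the projection of ∇ strictly contains the projection of the sub-polytope with vertices (-1,1,0), (1,-1,-2), (1,-1,2). -/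
open Set

noncomputable section

def dot3 (x y : ℝ × ℝ × ℝ) : ℝ := x.1 * y.1 + x.2.1 * y.2.1 + x.2.2 * y.2.2

def isLattice3 (x : ℝ × ℝ × ℝ) : Prop := ∃ a b c : ℤ, x = ((a : ℝ), (b : ℝ), (c : ℝ))

def dual3 (P : Set (ℝ × ℝ × ℝ)) : Set (ℝ × ℝ × ℝ) := {v | ∀ m ∈ P, dot3 m v ≥ -1}

def proj (x : ℝ × ℝ × ℝ) : ℝ × ℝ := (x.1, x.2.1)

/-- The polytope ∇ with vertices (-1,1,0), (2,-1,0), (-1,-1,-6), (-1,-1,6). -/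
def nabla9 : Set (ℝ × ℝ × ℝ) :=
  convexHull ℝ {((-1 : ℝ), (1 : ℝ), (0 : ℝ)), ((2 : ℝ), (-1 : ℝ), (0 : ℝ)),
    ((-1 : ℝ), (-1 : ℝ), (-6 : ℝ)), ((-1 : ℝ), (-1 : ℝ), (6 : ℝ))}

/-- The 2-dimensional reflexive polytope with vertices (-1,1), (1,-1) (and the lattice
points between them) together with (2,-1). -/
def poly9 : Set (ℝ × ℝ) :=
  convexHull ℝ {((-1 : ℝ), (1 : ℝ)), ((1 : ℝ), (-1 : ℝ)), ((2 : ℝ), (-1 : ℝ))}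

/-- The sub-polytope with vertices (-1,1,0), (1,-1,-2), (1,-1,2). -/
def sub9 : Set (ℝ × ℝ × ℝ) :=
  convexHull ℝ {((-1 : ℝ), (1 : ℝ), (0 : ℝ)), ((1 : ℝ), (-1 : ℝ), (-2 : ℝ)),
    ((1 : ℝ), (-1 : ℝ), (2 : ℝ))}

/- ### Auxiliary machinery -/

lemma mem_hull4 {E : Type*} [AddCommGroup E] [Module ℝ E] {v0 v1 v2 v3 x : E}
    {w0 w1 w2 w3 : ℝ} (h0 : 0 ≤ w0) (h1 : 0 ≤ w1) (h2 : 0 ≤ w2) (h3 : 0 ≤ w3)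
    (hsum : w0 + w1 + w2 + w3 = 1)
    (hx : w0 • v0 + w1 • v1 + w2 • v2 + w3 • v3 = x) :
    x ∈ convexHull ℝ ({v0, v1, v2, v3} : Set E) := by
  have hconv := convex_convexHull ℝ ({v0, v1, v2, v3} : Set E)
  have := hconv.sum_mem (t := (Finset.univ : Finset (Fin 4))) (w := ![w0, w1, w2, w3])
    (z := ![v0, v1, v2, v3]) (fun i _ => by fin_cases i <;> simpa)
    (by rw [Fin.sum_univ_four]; simpa using hsum)
    (fun i _ => by fin_cases i <;> exact subset_convexHull ℝ _ (by simp))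
  rw [Fin.sum_univ_four] at this
  simpa [hx] using this

lemma isLinearMap_dotR (y : ℝ × ℝ × ℝ) :
    IsLinearMap ℝ (fun x : ℝ × ℝ × ℝ => x.1 * y.1 + x.2.1 * y.2.1 + x.2.2 * y.2.2) := by
  constructor
  · intro a b; simp [Prod.fst_add, Prod.snd_add]; ring
  · intro c a; simp [Prod.smul_fst, Prod.smul_snd, smul_eq_mul]; ring

lemma isLinearMap_dotL (y : ℝ × ℝ × ℝ) :
    IsLinearMap ℝ (fun x : ℝ × ℝ × ℝ => y.1 * x.1 + y.2.1 * x.2.1 + y.2.2 * x.2.2) := by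
  constructor
  · intro a b; simp [Prod.fst_add, Prod.snd_add]; ring
  · intro c a; simp [Prod.smul_fst, Prod.smul_snd, smul_eq_mul]; ring

/-- The H-representation of `nabla9`. -/
def Hset : Set (ℝ × ℝ × ℝ) :=
  {x | -1 ≤ dot3 x (-2, -3, 1)} ∩ {x | -1 ≤ dot3 x (-2, -3, -1)} ∩
  {x | -1 ≤ dot3 x (1, 0, 0)} ∩ {x | -1 ≤ dot3 x (0, 1, 0)}

lemma convex_Hset : Convex ℝ Hset :=
  (((convex_halfSpace_ge (isLinearMap_dotR (-2, -3, 1)) (-1)).inter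
    (convex_halfSpace_ge (isLinearMap_dotR (-2, -3, -1)) (-1))).inter
    (convex_halfSpace_ge (isLinearMap_dotR (1, 0, 0)) (-1))).inter
    (convex_halfSpace_ge (isLinearMap_dotR (0, 1, 0)) (-1))

lemma Hset_subset_nabla9 : Hset ⊆ nabla9 := by
  rintro ⟨a, b, c⟩ ⟨⟨⟨h1, h2⟩, h3⟩, h4⟩
  simp only [mem_setOf_eq, dot3] at h1 h2 h3 h4
  norm_num at h1 h2 h3 h4
  refine mem_hull4 (w0 := (b + 1) / 2) (w1 := (a + 1) / 3)
    (w2 := (-2 * a - 3 * b - c + 1) / 12) (w3 := (-2 * a - 3 * b + c + 1) / 12)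
    (by linarith) (by linarith) (by linarith) (by linarith) (by ring) ?_
  simp only [Prod.smul_mk, smul_eq_mul, Prod.mk_add_mk, Prod.mk.injEq]
  refine ⟨by ring, by ring, by ring⟩

lemma nabla9_eq_Hset : nabla9 = Hset := by
  refine le_antisymm (convexHull_min ?_ convex_Hset) Hset_subset_nabla9
  intro x hx
  simp only [mem_insert_iff, mem_singleton_iff] at hx
  rcases hx with rfl | rfl | rfl | rfl <;>
    refine ⟨⟨⟨?_, ?_⟩, ?_⟩, ?_⟩ <;> simp [dot3] <;> norm_num

/-- The H-representation of the dual of `nabla9`. -/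
def Dset : Set (ℝ × ℝ × ℝ) :=
  {v | -1 ≤ dot3 (-1, 1, 0) v} ∩ {v | -1 ≤ dot3 (2, -1, 0) v} ∩
  {v | -1 ≤ dot3 (-1, -1, -6) v} ∩ {v | -1 ≤ dot3 (-1, -1, 6) v}

lemma convex_Dset : Convex ℝ Dset :=
  (((convex_halfSpace_ge (isLinearMap_dotL (-1, 1, 0)) (-1)).inter
    (convex_halfSpace_ge (isLinearMap_dotL (2, -1, 0)) (-1))).inter
    (convex_halfSpace_ge (isLinearMap_dotL (-1, -1, -6)) (-1))).inter
    (convex_halfSpace_ge (isLinearMap_dotL (-1, -1, 6)) (-1))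

lemma dual3_nabla9_eq : dual3 nabla9 = Dset := by
  ext v
  constructor
  · intro hv
    refine ⟨⟨⟨hv _ ?_, hv _ ?_⟩, hv _ ?_⟩, hv _ ?_⟩ <;>
      exact subset_convexHull ℝ _ (by simp)
  · rintro ⟨⟨⟨h1, h2⟩, h3⟩, h4⟩ m hm
    have hc : Convex ℝ {m : ℝ × ℝ × ℝ | -1 ≤ dot3 m v} :=
      convex_halfSpace_ge (isLinearMap_dotR v) (-1)
    refine convexHull_min ?_ hc hm
    intro x hx
    simp only [mem_insert_iff, mem_singleton_iff] at hx
    rcases hx with rfl | rfl | rfl | rfl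
    exacts [h1, h2, h3, h4]

lemma Dset_eq_hull : Dset = convexHull ℝ
    ({((-2 : ℝ), (-3 : ℝ), (1 : ℝ)), ((-2 : ℝ), (-3 : ℝ), (-1 : ℝ)),
      ((1 : ℝ), (0 : ℝ), (0 : ℝ)), ((0 : ℝ), (1 : ℝ), (0 : ℝ))} : Set (ℝ × ℝ × ℝ)) := by
  refine le_antisymm ?_ (convexHull_min ?_ convex_Dset)
  · rintro ⟨x, y, z⟩ ⟨⟨⟨h1, h2⟩, h3⟩, h4⟩
    simp only [mem_setOf_eq, dot3] at h1 h2 h3 h4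
    norm_num at h1 h2 h3 h4
    refine mem_hull4 (w0 := (-x - y + 6 * z + 1) / 12) (w1 := (-x - y - 6 * z + 1) / 12)
      (w2 := (2 * x - y + 1) / 3) (w3 := (-x + y + 1) / 2)
      (by linarith) (by linarith) (by linarith) (by linarith) (by ring) ?_
    simp only [Prod.smul_mk, smul_eq_mul, Prod.mk_add_mk, Prod.mk.injEq]
    refine ⟨by ring, by ring, by ring⟩
  · intro x hx
    simp only [mem_insert_iff, mem_singleton_iff] at hx
    rcases hx with rfl | rfl | rfl | rfl <;>
      refine ⟨⟨⟨?_, ?_⟩, ?_⟩, ?_⟩ <;> simp [dot3, Dset] <;> norm_num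

lemma sub9_subset_nabla9 : sub9 ⊆ nabla9 := by
  rw [nabla9_eq_Hset]
  refine convexHull_min ?_ convex_Hset
  intro x hx
  simp only [mem_insert_iff, mem_singleton_iff] at hx
  rcases hx with rfl | rfl | rfl <;>
    refine ⟨⟨⟨?_, ?_⟩, ?_⟩, ?_⟩ <;> simp [dot3] <;> norm_num

lemma sub9_subset_plane : sub9 ⊆ {x : ℝ × ℝ × ℝ | x.1 + x.2.1 = 0} := by
  refine convexHull_min ?_ ?_
  · intro x hx
    simp only [mem_insert_iff, mem_singleton_iff] at hx
    rcases hx with rfl | rfl | rfl <;> norm_num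
  · intro p hp q hq a b ha hb hab
    simp only [mem_setOf_eq, Prod.fst_add, Prod.snd_add, Prod.smul_fst, Prod.smul_snd,
      smul_eq_mul] at *
    linear_combination a * hp + b * hq

lemma poly9_subset : poly9 ⊆ {p : ℝ × ℝ | 0 ≤ p.1 + p.2} := by
  refine convexHull_min ?_ ?_
  · intro p hp
    simp only [mem_insert_iff, mem_singleton_iff] at hp
    rcases hp with rfl | rfl | rfl <;> norm_num
  · intro p hp q hq a b ha hb hab
    simp only [mem_setOf_eq, Prod.fst_add, Prod.snd_add, Prod.smul_fst, Prod.smul_snd,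
      smul_eq_mul] at *
    nlinarith

/-- ∇ is reflexive, but the image of its lattice points under the projection is not
contained in `poly9`; in particular the projection of ∇ strictly contains the projection
of the sub-polytope `sub9`. -/
theorem stmt9 :
    ((0 : ℝ), (0 : ℝ), (0 : ℝ)) ∈ interior nabla9 ∧
    (∃ T : Finset (ℝ × ℝ × ℝ), (∀ x ∈ T, isLattice3 x) ∧
      dual3 nabla9 = convexHull ℝ (T : Set (ℝ × ℝ × ℝ))) ∧
    ¬ (proj '' {x | x ∈ nabla9 ∧ isLattice3 x} ⊆ poly9) ∧
    proj '' sub9 ⊂ proj '' nabla9 := by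
  classical
  refine ⟨?_, ?_, ?_, ?_⟩
  · -- 0 is in the interior
    set U : Set (ℝ × ℝ × ℝ) :=
      {x | -1 < dot3 x (-2, -3, 1)} ∩ {x | -1 < dot3 x (-2, -3, -1)} ∩
      {x | -1 < dot3 x (1, 0, 0)} ∩ {x | -1 < dot3 x (0, 1, 0)} with hU
    have hopen : IsOpen U := by
      refine (((?_ : IsOpen _).inter ?_).inter ?_).inter ?_ <;>
        · simp only [dot3]
          exact isOpen_lt continuous_const (by fun_prop)
    have hUsub : U ⊆ nabla9 := by
      rw [nabla9_eq_Hset]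
      rintro x hx
      simp only [hU, mem_inter_iff, mem_setOf_eq] at hx
      simp only [Hset, mem_inter_iff, mem_setOf_eq]
      exact ⟨⟨⟨hx.1.1.1.le, hx.1.1.2.le⟩, hx.1.2.le⟩, hx.2.le⟩
    refine interior_maximal hUsub hopen ?_
    refine ⟨⟨⟨?_, ?_⟩, ?_⟩, ?_⟩ <;> simp [dot3]
  · -- reflexivity: dual is hull of lattice points
    refine ⟨{((-2 : ℝ), (-3 : ℝ), (1 : ℝ)), ((-2 : ℝ), (-3 : ℝ), (-1 : ℝ)),
      ((1 : ℝ), (0 : ℝ), (0 : ℝ)), ((0 : ℝ), (1 : ℝ), (0 : ℝ))}, ?_, ?_⟩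
    · intro x hx
      simp only [Finset.mem_insert, Finset.mem_singleton] at hx
      rcases hx with rfl | rfl | rfl | rfl
      exacts [⟨-2, -3, 1, by norm_num⟩, ⟨-2, -3, -1, by norm_num⟩,
        ⟨1, 0, 0, by norm_num⟩, ⟨0, 1, 0, by norm_num⟩]
    · rw [dual3_nabla9_eq, Dset_eq_hull]
      congr 1
      simp
  · -- lattice point (0,-1,2) projects outside poly9
    intro hsub
    have hmem : ((0 : ℝ), (-1 : ℝ), (2 : ℝ)) ∈ nabla9 := by
      rw [nabla9_eq_Hset]
      refine ⟨⟨⟨?_, ?_⟩, ?_⟩, ?_⟩ <;> simp [dot3] <;> norm_num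
    have h1 : ((0 : ℝ), (-1 : ℝ)) ∈ poly9 :=
      hsub ⟨((0 : ℝ), (-1 : ℝ), (2 : ℝ)), ⟨hmem, ⟨0, -1, 2, by norm_num⟩⟩, rfl⟩
    have := poly9_subset h1
    norm_num at this
  · -- strict inclusion of projections
    rw [Set.ssubset_def]
    refine ⟨Set.image_mono sub9_subset_nabla9, fun hcon => ?_⟩
    have h2 : ((2 : ℝ), (-1 : ℝ)) ∈ proj '' nabla9 :=
      ⟨((2 : ℝ), (-1 : ℝ), (0 : ℝ)), subset_convexHull ℝ _ (by simp), rfl⟩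
    obtain ⟨x, hx, hpx⟩ := hcon h2
    have hplane := sub9_subset_plane hx
    simp only [proj, Prod.mk.injEq] at hpx
    simp only [mem_setOf_eq, hpx.1, hpx.2] at hplane
    norm_num at hplane
end
end
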